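/- Let U < V be real numbers and let g : ℝ → ℝ be defined by g(θ) = exp(−(0.02/(θ − U)² + 0.02/(V − θ)²)) for U < θ < V and g(θ) = 0 otherwise. For c > 0 set r_c(θ) = 1 + c·g(θ). There exists c₀ > 0 such that for all c with 0 < c ≤ c₀ and all θ ∈ ℝ, the signed-curvature numerator of the polar curve θ ↦ (r_c(θ) cos θ, r_c(θ) sin θ) is positive: r_c(θ)² + 2·(r_c′(θ))² − r_c(θ)·r_c″(θ) > 0. (Hence the signed curvature of this curve is everywhere positive and the region it bounds, when such arcs replace arcs of the unit circle, is convex.) -/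

import Mathlib

open Real Set Polynomial

noncomputable def myPhi (y : ℝ) : ℝ := (y ^ 2)⁻¹ * expNegInvGlue y

lemma hasDerivAt_expNegInvGlue' (y : ℝ) :
    HasDerivAt expNegInvGlue (myPhi y) y := by
  have := expNegInvGlue.hasDerivAt_polynomial_eval_inv_mul 1 y
  simpa [myPhi, inv_pow] using this

lemma myPhi_differentiable : Differentiable ℝ myPhi := by
  have := expNegInvGlue.differentiable_polynomial_eval_inv_mul (X ^ 2 : ℝ[X])
  simp [myPhi, inv_pow] at this; exact this

lemma myPhi_zero : myPhi 0 = 0 := by simp [myPhi]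

lemma expNegInvGlue_le_one (y : ℝ) : expNegInvGlue y ≤ 1 := by
  rw [expNegInvGlue]
  split
  · norm_num
  · rename_i h
    push_neg at h
    calc Real.exp (-y⁻¹) ≤ Real.exp 0 := by
          apply Real.exp_le_exp.2; simp [le_of_lt h]
      _ = 1 := Real.exp_zero

noncomputable def myK (U V θ : ℝ) : ℝ :=
  (θ - U) ^ 2 * (V - θ) ^ 2 / (0.02 * ((θ - U) ^ 2 + (V - θ) ^ 2))

lemma myQ_pos {U V : ℝ} (hUV : U < V) (θ : ℝ) :
    0 < (θ - U) ^ 2 + (V - θ) ^ 2 := by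
  rcases eq_or_ne θ U with rfl | h
  · have h2 : V - θ ≠ 0 := sub_ne_zero.2 (ne_of_gt hUV)
    have := sq_pos_iff.2 h2
    nlinarith [sq_nonneg (θ - θ)]
  · have h2 : θ - U ≠ 0 := sub_ne_zero.2 h
    have := sq_pos_iff.2 h2
    nlinarith [sq_nonneg (V - θ)]

lemma myK_contDiff {U V : ℝ} (hUV : U < V) : ContDiff ℝ 2 (myK U V) := by
  apply ContDiff.div
  · exact (((contDiff_id.sub contDiff_const).pow 2).mul
      ((contDiff_const.sub contDiff_id).pow 2))
  · exact contDiff_const.mul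
      (((contDiff_id.sub contDiff_const).pow 2).add ((contDiff_const.sub contDiff_id).pow 2))
  · intro θ
    have := myQ_pos hUV θ
    positivity

lemma myK_zeroU (U V : ℝ) : myK U V U = 0 := by simp [myK]
lemma myK_zeroV (U V : ℝ) : myK U V V = 0 := by simp [myK]

lemma myK_hasDerivAt_U {U V : ℝ} (hUV : U < V) : HasDerivAt (myK U V) 0 U := by
  have hrw : myK U V = fun θ =>
      (θ - U) ^ 2 * ((V - θ) ^ 2 / (0.02 * ((θ - U) ^ 2 + (V - θ) ^ 2))) :=
    funext fun θ => mul_div_assoc _ _ _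
  rw [hrw]
  have h1 : HasDerivAt (fun θ : ℝ => (θ - U) ^ 2) 0 U := by
    have := ((hasDerivAt_id U).sub_const U).pow 2; simp at this; exact this
  have h2 : DifferentiableAt ℝ
      (fun θ : ℝ => (V - θ) ^ 2 / (0.02 * ((θ - U) ^ 2 + (V - θ) ^ 2))) U := by
    apply DifferentiableAt.div
    · fun_prop
    · fun_prop
    · have := myQ_pos hUV U; positivity
  have := h1.mul h2.hasDerivAt
  simp at this; exact this

lemma myK_hasDerivAt_V {U V : ℝ} (hUV : U < V) : HasDerivAt (myK U V) 0 V := by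
  have hrw : myK U V = fun θ =>
      (V - θ) ^ 2 * ((θ - U) ^ 2 / (0.02 * ((θ - U) ^ 2 + (V - θ) ^ 2))) :=
    funext fun θ => by rw [myK]; ring
  rw [hrw]
  have h1 : HasDerivAt (fun θ : ℝ => (V - θ) ^ 2) 0 V := by
    have := ((hasDerivAt_id V).const_sub V).pow 2; simp at this; exact this
  have h2 : DifferentiableAt ℝ
      (fun θ : ℝ => (θ - U) ^ 2 / (0.02 * ((θ - U) ^ 2 + (V - θ) ^ 2))) V := by
    apply DifferentiableAt.div
    · fun_prop
    · fun_prop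
    · have := myQ_pos hUV V; positivity
  have := h1.mul h2.hasDerivAt
  simp at this; exact this

noncomputable def myG (U V θ : ℝ) : ℝ := expNegInvGlue (myK U V θ)

lemma myG_contDiff {U V : ℝ} (hUV : U < V) : ContDiff ℝ 2 (myG U V) :=
  expNegInvGlue.contDiff.comp (myK_contDiff hUV)

lemma myK_diff {U V : ℝ} (hUV : U < V) : Differentiable ℝ (myK U V) :=
  (myK_contDiff hUV).differentiable (by norm_num)

lemma myG_hasDerivAt {U V : ℝ} (hUV : U < V) (θ : ℝ) :
    HasDerivAt (myG U V) (myPhi (myK U V θ) * deriv (myK U V) θ) θ :=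
  (hasDerivAt_expNegInvGlue' (myK U V θ)).comp θ ((myK_diff hUV θ).hasDerivAt)

lemma myG_hasDerivAt' {U V : ℝ} (hUV : U < V) (θ : ℝ) :
    HasDerivAt (myG U V) (deriv (myG U V) θ) θ :=
  (myG_hasDerivAt hUV θ).deriv ▸ myG_hasDerivAt hUV θ

lemma deriv_myG {U V : ℝ} (hUV : U < V) :
    deriv (myG U V) = fun θ => myPhi (myK U V θ) * deriv (myK U V) θ :=
  funext fun θ => (myG_hasDerivAt hUV θ).deriv

lemma deriv_myG_U {U V : ℝ} (hUV : U < V) : deriv (myG U V) U = 0 := by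
  rw [deriv_myG hUV]
  simp [(myK_hasDerivAt_U hUV).deriv]

lemma deriv_myG_V {U V : ℝ} (hUV : U < V) : deriv (myG U V) V = 0 := by
  rw [deriv_myG hUV]
  simp [(myK_hasDerivAt_V hUV).deriv]

lemma derivK_contDiff {U V : ℝ} (hUV : U < V) : ContDiff ℝ 1 (deriv (myK U V)) := by
  have h := myK_contDiff hUV
  rw [show (2 : WithTop ℕ∞) = 1 + 1 by rfl] at h
  exact (contDiff_succ_iff_deriv.mp h).2.2

lemma hasDerivAt_deriv_myG_U {U V : ℝ} (hUV : U < V) :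
    HasDerivAt (deriv (myG U V)) 0 U := by
  rw [deriv_myG hUV]
  have h1 : HasDerivAt (fun θ => myPhi (myK U V θ)) (deriv myPhi (myK U V U) * 0) U :=
    ((myPhi_differentiable (myK U V U)).hasDerivAt).comp U (myK_hasDerivAt_U hUV)
  have h2 : HasDerivAt (deriv (myK U V)) (deriv (deriv (myK U V)) U) U :=
    (((derivK_contDiff hUV).differentiable (by norm_num)) U).hasDerivAt
  have := h1.mul h2
  simp [myK_zeroU, myPhi_zero, (myK_hasDerivAt_U hUV).deriv] at this; exact this

lemma hasDerivAt_deriv_myG_V {U V : ℝ} (hUV : U < V) :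
    HasDerivAt (deriv (myG U V)) 0 V := by
  rw [deriv_myG hUV]
  have h1 : HasDerivAt (fun θ => myPhi (myK U V θ)) (deriv myPhi (myK U V V) * 0) V :=
    ((myPhi_differentiable (myK U V V)).hasDerivAt).comp V (myK_hasDerivAt_V hUV)
  have h2 : HasDerivAt (deriv (myK U V)) (deriv (deriv (myK U V)) V) V :=
    (((derivK_contDiff hUV).differentiable (by norm_num)) V).hasDerivAt
  have := h1.mul h2
  simp [myK_zeroV, myPhi_zero, (myK_hasDerivAt_V hUV).deriv] at this; exact this

lemma derivG_contDiff {U V : ℝ} (hUV : U < V) : ContDiff ℝ 1 (deriv (myG U V)) := by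
  have h := myG_contDiff hUV
  rw [show (2 : WithTop ℕ∞) = 1 + 1 by rfl] at h
  exact (contDiff_succ_iff_deriv.mp h).2.2

lemma derivG_hasDerivAt {U V : ℝ} (hUV : U < V) (θ : ℝ) :
    HasDerivAt (deriv (myG U V)) (deriv (deriv (myG U V)) θ) θ :=
  (((derivG_contDiff hUV).differentiable (by norm_num)) θ).hasDerivAt

lemma contDeriv2_myG {U V : ℝ} (hUV : U < V) : Continuous (deriv (deriv (myG U V))) :=
  (derivG_contDiff hUV).continuous_deriv (le_refl 1)

/-- For the perturbed polar curve `r_c(θ) = 1 + c·g(θ)`, where `g` is the bump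
function `exp(−(0.02/(θ−U)² + 0.02/(V−θ)²))` on `(U, V)` and `0` elsewhere,
there is `c₀ > 0` such that for every `0 < c ≤ c₀` the signed-curvature
numerator `r² + 2r′² − r·r″` is positive everywhere. -/
theorem polar_perturbation_convex (U V : ℝ) (hUV : U < V) (g : ℝ → ℝ)
    (hg : ∀ θ : ℝ, g θ =
      if U < θ ∧ θ < V then
        Real.exp (-(0.02 / (θ - U) ^ 2 + 0.02 / (V - θ) ^ 2))
      else 0) :
    ∃ c₀ : ℝ, 0 < c₀ ∧ ∀ c : ℝ, 0 < c → c ≤ c₀ →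
      ∀ θ : ℝ,
        0 < (fun t => 1 + c * g t) θ ^ 2 +
              2 * (deriv (fun t => 1 + c * g t) θ) ^ 2 -
              (fun t => 1 + c * g t) θ *
                deriv (deriv (fun t => 1 + c * g t)) θ := by
  classical
  set G : ℝ → ℝ := myG U V with hGdef
  have hgout : ∀ θ : ℝ, ¬(U < θ ∧ θ < V) → g θ = 0 := by
    intro θ h; rw [hg, if_neg h]
  have hgG : ∀ θ ∈ Icc U V, g θ = G θ := by
    rintro θ ⟨h1, h2⟩
    rcases eq_or_lt_of_le h1 with rfl | h1'
    · rw [hgout U (by simp)]; simp [hGdef, myG, myK_zeroU]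
    rcases eq_or_lt_of_le h2 with rfl | h2'
    · rw [hgout θ (by simp)]; simp [hGdef, myG, myK_zeroV]
    have hU0 : θ - U ≠ 0 := sub_ne_zero.2 (ne_of_gt h1')
    have hV0 : V - θ ≠ 0 := sub_ne_zero.2 (ne_of_gt h2')
    have hkpos : 0 < myK U V θ := by
      rw [myK]
      have h3 := myQ_pos hUV θ
      have hUp : (0:ℝ) < (θ - U) ^ 2 := sq_pos_iff.2 hU0
      have hVp : (0:ℝ) < (V - θ) ^ 2 := sq_pos_iff.2 hV0
      positivity
    rw [hg, if_pos ⟨h1', h2'⟩, hGdef]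
    show _ = expNegInvGlue (myK U V θ)
    rw [expNegInvGlue, if_neg (not_le.2 hkpos), myK]
    congr 1
    rw [inv_div, div_add_div _ _ (pow_ne_zero 2 hU0) (pow_ne_zero 2 hV0), neg_inj,
      div_eq_div_iff (by positivity) (by positivity)]
    ring
  set D : ℝ → ℝ := fun θ => if U < θ ∧ θ < V then deriv G θ else 0 with hDdef
  set E : ℝ → ℝ := fun θ => if U < θ ∧ θ < V then deriv (deriv G) θ else 0 with hEdef
  have hDIcc : ∀ x ∈ Icc U V, D x = deriv G x := by
    rintro x ⟨h1, h2⟩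
    by_cases hx : U < x ∧ x < V
    · simp only [hDdef]; rw [if_pos hx]
    · simp only [hDdef]; rw [if_neg hx]
      have hxe : x = U ∨ x = V := by
        rcases eq_or_lt_of_le h1 with rfl | h1'
        · exact Or.inl rfl
        rcases eq_or_lt_of_le h2 with rfl | h2'
        · exact Or.inr rfl
        exact absurd ⟨h1', h2'⟩ hx
      rcases hxe with rfl | rfl
      · exact (deriv_myG_U hUV).symm
      · exact (deriv_myG_V hUV).symm
  have hDout : ∀ x : ℝ, ¬(U < x ∧ x < V) → D x = 0 := by
    intro x hx; simp only [hDdef]; rw [if_neg hx]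
  have hgD : ∀ θ : ℝ, HasDerivAt g (D θ) θ := by
    intro θ
    rcases lt_trichotomy U θ with hUθ | rfl | hθU
    case inr.inl =>
      rw [hDout U (by rintro ⟨h, _⟩; exact lt_irrefl _ h)]
      have hleft : HasDerivWithinAt g 0 (Iic U) U := by
        refine (hasDerivWithinAt_const U (Iic U) (0:ℝ)).congr ?_ ?_
        · intro x hx
          exact hgout x (fun h => absurd h.1 (not_lt.2 hx))
        · exact hgout U (fun h => lt_irrefl _ h.1)
      have hright : HasDerivWithinAt g 0 (Icc U V) U := by
        have hG0 : HasDerivAt G 0 U := deriv_myG_U hUV ▸ myG_hasDerivAt' hUV U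
        exact hG0.hasDerivWithinAt.congr hgG (hgG U ⟨le_refl U, hUV.le⟩)
      have hu := hleft.union hright
      rw [Iic_union_Icc_eq_Iic hUV.le] at hu
      exact hu.hasDerivAt (Iic_mem_nhds hUV)
    case inr.inr =>
      rw [hDout θ (by rintro ⟨h, _⟩; linarith)]
      refine (hasDerivAt_const θ (0:ℝ)).congr_of_eventuallyEq ?_
      filter_upwards [Iio_mem_nhds hθU] with x hx
      exact hgout x (by rintro ⟨h, _⟩; exact absurd h (not_lt.2 (le_of_lt hx)))
    rcases lt_trichotomy V θ with hVθ | rfl | hθV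
    case inr.inr =>
      have hmem : U < θ ∧ θ < V := ⟨hUθ, hθV⟩
      have hD : D θ = deriv G θ := by simp only [hDdef]; rw [if_pos hmem]
      rw [hD]
      refine (myG_hasDerivAt' hUV θ).congr_of_eventuallyEq ?_
      filter_upwards [Ioo_mem_nhds hUθ hθV] with x hx
      exact hgG x ⟨hx.1.le, hx.2.le⟩
    case inr.inl =>
      rw [hDout V (by rintro ⟨_, h⟩; exact lt_irrefl _ h)]
      have hleft : HasDerivWithinAt g 0 (Icc U V) V := by
        have hG0 : HasDerivAt G 0 V := deriv_myG_V hUV ▸ myG_hasDerivAt' hUV V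
        exact hG0.hasDerivWithinAt.congr hgG (hgG V ⟨hUV.le, le_refl V⟩)
      have hright : HasDerivWithinAt g 0 (Ici V) V := by
        refine (hasDerivWithinAt_const V (Ici V) (0:ℝ)).congr ?_ ?_
        · intro x hx
          exact hgout x (fun h => absurd h.2 (not_lt.2 hx))
        · exact hgout V (fun h => lt_irrefl _ h.2)
      have hu := hleft.union hright
      rw [Icc_union_Ici' (le_refl V), min_eq_left hUV.le] at hu
      exact hu.hasDerivAt (Ici_mem_nhds hUV)
    case inl =>
      rw [hDout θ (by rintro ⟨_, h⟩; linarith)]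
      refine (hasDerivAt_const θ (0:ℝ)).congr_of_eventuallyEq ?_
      filter_upwards [Ioi_mem_nhds hVθ] with x hx
      exact hgout x (by rintro ⟨_, h⟩; exact absurd h (not_lt.2 (le_of_lt hx)))
  have hEout : ∀ x : ℝ, ¬(U < x ∧ x < V) → E x = 0 := by
    intro x hx; simp only [hEdef]; rw [if_neg hx]
  have hDE : ∀ θ : ℝ, HasDerivAt D (E θ) θ := by
    intro θ
    rcases lt_trichotomy U θ with hUθ | rfl | hθU
    case inr.inl =>
      rw [hEout U (by rintro ⟨h, _⟩; exact lt_irrefl _ h)]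
      have hleft : HasDerivWithinAt D 0 (Iic U) U := by
        refine (hasDerivWithinAt_const U (Iic U) (0:ℝ)).congr ?_ ?_
        · intro x hx
          exact hDout x (fun h => absurd h.1 (not_lt.2 hx))
        · exact hDout U (fun h => lt_irrefl _ h.1)
      have hright : HasDerivWithinAt D 0 (Icc U V) U :=
        (hasDerivAt_deriv_myG_U hUV).hasDerivWithinAt.congr hDIcc
          (hDIcc U ⟨le_refl U, hUV.le⟩)
      have hu := hleft.union hright
      rw [Iic_union_Icc_eq_Iic hUV.le] at hu
      exact hu.hasDerivAt (Iic_mem_nhds hUV)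
    case inr.inr =>
      rw [hEout θ (by rintro ⟨h, _⟩; linarith)]
      refine (hasDerivAt_const θ (0:ℝ)).congr_of_eventuallyEq ?_
      filter_upwards [Iio_mem_nhds hθU] with x hx
      exact hDout x (by rintro ⟨h, _⟩; exact absurd h (not_lt.2 (le_of_lt hx)))
    rcases lt_trichotomy V θ with hVθ | rfl | hθV
    case inr.inr =>
      have hmem : U < θ ∧ θ < V := ⟨hUθ, hθV⟩
      have hE : E θ = deriv (deriv G) θ := by simp only [hEdef]; rw [if_pos hmem]
      rw [hE]
      refine (derivG_hasDerivAt hUV θ).congr_of_eventuallyEq ?_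
      filter_upwards [Ioo_mem_nhds hUθ hθV] with x hx
      exact hDIcc x ⟨hx.1.le, hx.2.le⟩
    case inr.inl =>
      rw [hEout V (by rintro ⟨_, h⟩; exact lt_irrefl _ h)]
      have hleft : HasDerivWithinAt D 0 (Icc U V) V :=
        (hasDerivAt_deriv_myG_V hUV).hasDerivWithinAt.congr hDIcc
          (hDIcc V ⟨hUV.le, le_refl V⟩)
      have hright : HasDerivWithinAt D 0 (Ici V) V := by
        refine (hasDerivWithinAt_const V (Ici V) (0:ℝ)).congr ?_ ?_
        · intro x hx
          exact hDout x (fun h => absurd h.2 (not_lt.2 hx))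
        · exact hDout V (fun h => lt_irrefl _ h.2)
      have hu := hleft.union hright
      rw [Icc_union_Ici' (le_refl V), min_eq_left hUV.le] at hu
      exact hu.hasDerivAt (Ici_mem_nhds hUV)
    case inl =>
      rw [hEout θ (by rintro ⟨_, h⟩; linarith)]
      refine (hasDerivAt_const θ (0:ℝ)).congr_of_eventuallyEq ?_
      filter_upwards [Ioi_mem_nhds hVθ] with x hx
      exact hDout x (by rintro ⟨_, h⟩; exact absurd h (not_lt.2 (le_of_lt hx)))
  -- bound the second derivative on the compact interval
  obtain ⟨M, hM⟩ := isCompact_Icc.exists_bound_of_continuousOn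
    (s := Icc U V) (contDeriv2_myG hUV).continuousOn
  have hMd : ∀ θ : ℝ, |E θ| ≤ |M| := by
    intro θ
    by_cases hx : U < θ ∧ θ < V
    · have hE : E θ = deriv (deriv G) θ := by simp only [hEdef]; rw [if_pos hx]
      rw [hE]
      calc |deriv (deriv G) θ| ≤ M := hM θ ⟨hx.1.le, hx.2.le⟩
        _ ≤ |M| := le_abs_self M
    · rw [hEout θ hx]; simp
  have hg0 : ∀ θ : ℝ, 0 ≤ g θ := by
    intro θ
    by_cases hx : U < θ ∧ θ < V
    · rw [hg, if_pos hx]; exact (Real.exp_pos _).le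
    · rw [hgout θ hx]
  have hg1 : ∀ θ : ℝ, g θ ≤ 1 := by
    intro θ
    by_cases hx : U < θ ∧ θ < V
    · rw [hg, if_pos hx]
      apply Real.exp_le_one_iff.2
      have h1 : (0:ℝ) ≤ 0.02 / (θ - U) ^ 2 := by positivity
      have h2 : (0:ℝ) ≤ 0.02 / (V - θ) ^ 2 := by positivity
      linarith
    · rw [hgout θ hx]; norm_num
  refine ⟨1 / (2 * (|M| + 1)), by positivity, ?_⟩
  intro c hc hcc θ
  have hderiv1 : deriv (fun t => 1 + c * g t) = fun x => c * D x :=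
    funext fun x => (((hgD x).const_mul c).const_add 1).deriv
  have hderiv2 : deriv (deriv (fun t => 1 + c * g t)) θ = c * E θ := by
    rw [hderiv1]
    exact ((hDE θ).const_mul c).deriv
  rw [hderiv2]
  simp only [hderiv1]
  have hM0 : (0:ℝ) ≤ |M| := abs_nonneg M
  have hc2 : c * (|M| + 1) ≤ 1 / 2 := by
    calc c * (|M| + 1) ≤ (1 / (2 * (|M| + 1))) * (|M| + 1) := by
          apply mul_le_mul_of_nonneg_right hcc (by positivity)
      _ = 1 / 2 := by field_simp
  have hE1 := abs_le.1 (hMd θ)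
  have hga := hg0 θ
  have hgb := hg1 θ
  have hcg : c * g θ ≤ 1 / 2 := by nlinarith
  have hce1 : c * E θ ≤ 1 / 2 := by nlinarith
  have hce2 : -(1 / 2) ≤ c * E θ := by nlinarith
  have hcg0 : 0 ≤ c * g θ := mul_nonneg hc.le hga
  nlinarith [sq_nonneg (c * D θ), sq_nonneg (c * g θ)]
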